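/- Let G be a connected bipartite simple graph with at least 3 vertices. Then H_G = [1, ∞), [2, ∞) ⊆ H_G^φ ⊆ [1, ∞), and {1} ∪ [3, ∞) ⊆ H_G^ψ ⊆ [1, ∞). -/

import Mathlib

open Matrix

/-- Entrywise power with the convention `0 ^ α := 0` for all `α`. -/
noncomputable def powF (α x : ℝ) : ℝ := if x = 0 then 0 else x ^ α

/-- `ψ_α(x) := sgn(x) * |x| ^ α`, with `ψ_α(0) := 0`. -/
noncomputable def psiF (α x : ℝ) : ℝ := if x = 0 then 0 else Real.sign x * |x| ^ α

/-- `φ_α(x) := |x| ^ α`, with `φ_α(0) := 0`. -/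
noncomputable def phiF (α x : ℝ) : ℝ := if x = 0 then 0 else |x| ^ α
/-- `P_G(I)`: symmetric positive semidefinite matrices with entries in `I`, vanishing at
off-diagonal positions corresponding to non-edges of `G`. -/
def PG {V : Type*} [Fintype V] (G : SimpleGraph V) (I : Set ℝ) : Set (Matrix V V ℝ) :=
  {M | M.PosSemidef ∧ (∀ i j, M i j ∈ I) ∧ ∀ i j, i ≠ j → ¬ G.Adj i j → M i j = 0}

/-- `H_G`: powers `α` such that `A ↦ A^{∘α}` maps `P_G([0,∞))` into `P_G(ℝ)`. -/
noncomputable def HSet {V : Type*} [Fintype V] (G : SimpleGraph V) : Set ℝ :=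
  {α | ∀ A ∈ PG G (Set.Ici 0), A.map (powF α) ∈ PG G Set.univ}

/-- `H_G^ψ`: powers `α` such that `ψ_α[-]` maps `P_G(ℝ)` into `P_G(ℝ)`. -/
noncomputable def HSetPsi {V : Type*} [Fintype V] (G : SimpleGraph V) : Set ℝ :=
  {α | ∀ A ∈ PG G Set.univ, A.map (psiF α) ∈ PG G Set.univ}

/-- `H_G^φ`: powers `α` such that `φ_α[-]` maps `P_G(ℝ)` into `P_G(ℝ)`. -/
noncomputable def HSetPhi {V : Type*} [Fintype V] (G : SimpleGraph V) : Set ℝ :=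
  {α | ∀ A ∈ PG G Set.univ, A.map (phiF α) ∈ PG G Set.univ}

/-- A graph is chordal if every cycle of length at least 4 has a chord, i.e. an edge of `G`
joining two vertices of the cycle that is not an edge of the cycle. -/
def IsChordalG {V : Type*} (G : SimpleGraph V) : Prop :=
  ∀ ⦃v : V⦄ (w : G.Walk v v), w.IsCycle → 4 ≤ w.length →
    ∃ i j : V, i ∈ w.support ∧ j ∈ w.support ∧ G.Adj i j ∧ ¬ w.toSubgraph.Adj i j

section Aux
variable {V : Type*} [Fintype V]

lemma quadForm_expand (M : Matrix V V ℝ) (z : V → ℝ) :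
    z ⬝ᵥ M *ᵥ z = ∑ i, ∑ j, z i * M i j * z j := by
  simp [dotProduct, mulVec, Finset.mul_sum, mul_assoc]

lemma psd_quad {M : Matrix V V ℝ} (hM : M.PosSemidef) (z : V → ℝ) :
    0 ≤ ∑ i, ∑ j, z i * M i j * z j := by
  have := hM.dotProduct_mulVec_nonneg z
  simpa [quadForm_expand] using this

lemma posSemidef_of_quad (M : Matrix V V ℝ) (hsym : M.IsHermitian)
    (h : ∀ z : V → ℝ, 0 ≤ ∑ i, ∑ j, z i * M i j * z j) : M.PosSemidef :=
  PosSemidef.of_dotProduct_mulVec_nonneg hsym fun z => by simpa [quadForm_expand] using h z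

lemma psd_diag_nonneg {M : Matrix V V ℝ} (hM : M.PosSemidef) (i : V) : 0 ≤ M i i := by
  classical
  have := hM.dotProduct_mulVec_nonneg (Pi.single i 1)
  simpa using this

lemma psd_entry_sq_le {M : Matrix V V ℝ} (hM : M.PosSemidef) (i j : V) :
    M i j ^ 2 ≤ M i i * M j j := by
  classical
  have hsymm : M j i = M i j := by
    have := hM.1.apply i j
    simpa using this
  have h : ∀ t : ℝ, 0 ≤ M i i * (t * t) + (2 * M i j) * t + M j j := by
    intro t
    have := hM.dotProduct_mulVec_nonneg (t • (Pi.single i (1:ℝ) : V → ℝ) + (Pi.single j (1:ℝ) : V → ℝ))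
    simp only [mulVec_add, mulVec_smul, mulVec_single, dotProduct_add, add_dotProduct,
      smul_dotProduct, single_dotProduct, star_trivial, Pi.add_apply, Pi.smul_apply,
      smul_eq_mul, mul_one, Matrix.col_apply, MulOpposite.op_one, one_smul, one_mul] at this
    rw [hsymm] at this; nlinarith [this]
  have := discrim_le_zero h
  rw [discrim] at this
  nlinarith [this]
end Aux

section Schur
variable {V : Type*} [Fintype V]

lemma schur_psd {A B : Matrix V V ℝ} (hA : A.PosSemidef) (hB : B.PosSemidef) :
    (Matrix.of fun i j => A i j * B i j).PosSemidef := by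
  classical
  obtain ⟨L, hL⟩ : ∃ L : Matrix V V ℝ, B = Lᴴ * L := by
    open scoped MatrixOrder in
    obtain ⟨L, hL⟩ := CStarAlgebra.nonneg_iff_eq_star_mul_self.mp hB.nonneg
    exact ⟨L, hL⟩
  have hBentry : ∀ i j, B i j = ∑ k, L k i * L k j := by
    intro i j
    rw [hL]
    simp [Matrix.mul_apply, Matrix.conjTranspose_apply]
  refine posSemidef_of_quad _ ?_ ?_
  · show _ = _
    ext i j
    simp only [Matrix.conjTranspose_apply, Matrix.of_apply, star_trivial]
    rw [← hA.1.apply i j, ← hB.1.apply i j]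
    simp
  · intro z
    have key : ∀ i j, z i * (Matrix.of fun i j => A i j * B i j) i j * z j
        = ∑ k, (L k i * z i) * A i j * (L k j * z j) := by
      intro i j
      simp only [Matrix.of_apply, hBentry i j, Finset.mul_sum, Finset.sum_mul]
      refine Finset.sum_congr rfl fun k _ => by ring
    calc (0:ℝ) ≤ ∑ k, ∑ i, ∑ j, (L k i * z i) * A i j * (L k j * z j) := by
          refine Finset.sum_nonneg fun k _ => psd_quad hA (fun i => L k i * z i)
      _ = ∑ i, ∑ j, ∑ k, (L k i * z i) * A i j * (L k j * z j) := by
          rw [Finset.sum_comm]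
          refine Finset.sum_congr rfl fun i _ => by rw [Finset.sum_comm]
      _ = ∑ i, ∑ j, z i * (Matrix.of fun i j => A i j * B i j) i j * z j := by
          refine Finset.sum_congr rfl fun i _ => Finset.sum_congr rfl fun j _ => (key i j).symm
end Schur

section PowF

lemma powF_zero' (α : ℝ) : powF α 0 = 0 := by simp [powF]

lemma powF_nonneg (γ : ℝ) {x : ℝ} (hx : 0 ≤ x) : 0 ≤ powF γ x := by
  unfold powF
  split
  · exact le_rfl
  · exact Real.rpow_nonneg hx γ

lemma powF_of_pos {x : ℝ} (hx : 0 < x) (γ : ℝ) : powF γ x = x ^ γ := by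
  simp [powF, hx.ne']

lemma powF_id1 {d α γ : ℝ} (hd : 0 ≤ d) (h : α = 1 + 2*γ) :
    powF α d = d * (powF γ d)^2 := by
  rcases eq_or_lt_of_le hd with rfl | hd0
  · simp [powF]
  · rw [powF_of_pos hd0, powF_of_pos hd0, h, Real.rpow_add hd0, Real.rpow_one, sq,
      ← Real.rpow_add hd0]
    ring_nf

lemma powF_id2 {d α γ : ℝ} (hd : 0 ≤ d) (h : α = 2 + 4*γ) :
    powF α d = (d*d) * (powF γ (d*d))^2 := by
  rcases eq_or_lt_of_le hd with rfl | hd0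
  · simp [powF]
  · rw [powF_of_pos hd0, powF_of_pos (mul_pos hd0 hd0), h, sq,
      show d * d = d ^ (2:ℝ) from by rw [Real.rpow_two]; ring,
      ← Real.rpow_mul hd, ← Real.rpow_add hd0, ← Real.rpow_add hd0]
    ring_nf
end PowF

section Key
variable {V : Type*} [Fintype V]

lemma core_bound {a s p q γ : ℝ} (ha : 0 ≤ a) (hs : 0 ≤ s) (hp : 0 ≤ p) (hq : 0 ≤ q)
    (hsp : s ≤ p * q) (hγ : 0 ≤ γ) : a * s ^ γ ≤ a * (p ^ γ * q ^ γ) := by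
  rw [← Real.mul_rpow hp hq]
  exact mul_le_mul_of_nonneg_left (Real.rpow_le_rpow hs hsp hγ) ha

lemma key_psd (X : Set V) (C M : Matrix V V ℝ) (hC : C.PosSemidef)
    (hCnn : ∀ i j, i ≠ j → 0 ≤ C i j)
    (hpat : ∀ i j, i ≠ j → ((i ∈ X) ↔ (j ∈ X)) → C i j = 0)
    {γ : ℝ} (hsym : M.IsHermitian)
    (hdiag : ∀ i, M i i = C i i * (powF γ (C i i))^2)
    (hoff : ∀ i j, i ≠ j → |M i j| ≤ C i j * (powF γ (C i i) * powF γ (C j j))) :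
    M.PosSemidef := by
  classical
  refine posSemidef_of_quad M hsym fun z => ?_
  set w : V → ℝ := fun i => (if i ∈ X then 1 else -1) * (|z i| * powF γ (C i i)) with hw
  have h0 := psd_quad hC w
  refine le_trans h0 (Finset.sum_le_sum fun i _ => Finset.sum_le_sum fun j _ => ?_)
  rcases eq_or_ne i j with rfl | hij
  · have hww : w i * w i = (|z i| * powF γ (C i i)) * (|z i| * powF γ (C i i)) := by
      by_cases hi : i ∈ X <;> simp [hw, hi] <;> ring
    apply le_of_eq
    calc w i * C i i * w i = (w i * w i) * C i i := by ring
      _ = (|z i| * |z i|) * (powF γ (C i i) * powF γ (C i i)) * C i i := by rw [hww]; ring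
      _ = (z i * z i) * (powF γ (C i i))^2 * C i i := by rw [abs_mul_abs_self]; ring
      _ = z i * M i i * z i := by rw [hdiag i]; ring
  · have hei : 0 ≤ powF γ (C i i) := powF_nonneg γ (psd_diag_nonneg hC i)
    have hej : 0 ≤ powF γ (C j j) := powF_nonneg γ (psd_diag_nonneg hC j)
    have hcij := hCnn i j hij
    by_cases hsame : (i ∈ X) ↔ (j ∈ X)
    · have hc0 := hpat i j hij hsame
      have hM0 : M i j = 0 := by
        have h1 : |M i j| ≤ 0 := by simpa [hc0] using hoff i j hij
        exact abs_eq_zero.mp (le_antisymm h1 (abs_nonneg _))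
      simp [hc0, hM0]
    · have hσ : w i * w j
          = -((|z i| * powF γ (C i i)) * (|z j| * powF γ (C j j))) := by
        by_cases hi : i ∈ X <;> by_cases hj : j ∈ X
        · exact absurd (iff_of_true hi hj) hsame
        · simp only [hw, if_pos hi, if_neg hj]; ring
        · simp only [hw, if_neg hi, if_pos hj]; ring
        · exact absurd (iff_of_false hi hj) hsame
      have h1 : -(|z i| * |M i j| * |z j|) ≤ z i * M i j * z j := by
        calc -(|z i| * |M i j| * |z j|) = -|z i * M i j * z j| := by rw [abs_mul, abs_mul]
          _ ≤ _ := neg_abs_le _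
      have h2 := mul_le_mul_of_nonneg_left (hoff i j hij)
        (mul_nonneg (abs_nonneg (z i)) (abs_nonneg (z j)))
      have hlhs : w i * C i j * w j
          = -(C i j * ((|z i| * powF γ (C i i)) * (|z j| * powF γ (C j j)))) := by
        calc w i * C i j * w j = C i j * (w i * w j) := by ring
          _ = _ := by rw [hσ]; ring
      rw [hlhs]
      nlinarith [h1, h2]
end Key

section Apps
variable {V : Type*} [Fintype V]

lemma rpow_id1' {a γ : ℝ} (ha : 0 < a) : a ^ (1 + 2*γ) = a * (a*a) ^ γ := by
  rw [Real.rpow_add ha, Real.rpow_one,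
    show a*a = a^(2:ℝ) from by rw [Real.rpow_two]; ring, ← Real.rpow_mul ha.le]

lemma abs_id2 {a γ : ℝ} (ha : a ≠ 0) : |a| ^ (2+4*γ) = (a*a) * ((a*a)*(a*a)) ^ γ := by
  have h : 0 < |a| := abs_pos.mpr ha
  have h4 : (a*a)*(a*a) = |a| ^ ((4:ℝ)) := by
    rw [show (4:ℝ) = ((4:ℕ):ℝ) from by norm_num, Real.rpow_natCast,
      show (4:ℕ) = 2*2 from rfl, pow_mul, sq_abs]
    ring
  have h2 : a * a = |a| ^ ((2:ℝ)) := by rw [Real.rpow_two, sq_abs]; ring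
  rw [Real.rpow_add h, h4, ← Real.rpow_mul (abs_nonneg a), h2]

lemma rpow_id1'' {a α γ : ℝ} (ha : 0 < a) (h : α = 1 + 2*γ) : a ^ α = a * (a*a) ^ γ := by
  rw [h]; exact rpow_id1' ha

lemma abs_id2' {a α γ : ℝ} (ha : a ≠ 0) (h : α = 2 + 4*γ) :
    |a| ^ α = (a*a) * ((a*a)*(a*a)) ^ γ := by
  rw [h]; exact abs_id2 ha

lemma map_symm {A : Matrix V V ℝ} (hA : A.IsHermitian) (f : ℝ → ℝ) :
    (A.map f).IsHermitian := by
  show _ = _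
  ext i j
  simp only [conjTranspose_apply, map_apply, star_trivial]
  rw [← hA.apply i j]
  simp

lemma fwd_pow {G : SimpleGraph V} {X : Set V}
    (hbip : ∀ i j : V, G.Adj i j → (i ∈ X ↔ j ∉ X)) {α : ℝ} (hα : 1 ≤ α)
    {A : Matrix V V ℝ} (hA : A ∈ PG G (Set.Ici 0)) : (A.map (powF α)).PosSemidef := by
  obtain ⟨hpsd, hent, hpat⟩ := hA
  have hent' : ∀ i j, 0 ≤ A i j := fun i j => hent i j
  have hd : ∀ i, 0 ≤ A i i := fun i => hent' i i
  refine key_psd X A (A.map (powF α)) hpsd (fun i j _ => hent' i j) ?_ (γ := (α-1)/2)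
    (map_symm hpsd.1 _) ?_ ?_
  · intro i j hij hsame
    refine hpat i j hij fun hadj => ?_
    have := hbip i j hadj; tauto
  · intro i
    simp only [map_apply]
    exact powF_id1 (hd i) (by ring)
  · intro i j hij
    simp only [map_apply]
    have ha0 : 0 ≤ A i j := hent' i j
    rcases eq_or_lt_of_le ha0 with h0 | hpos
    · rw [← h0, powF_zero']
      simp
    · have hsq : (A i j)^2 ≤ A i i * A j j := psd_entry_sq_le hpsd i j
      have hasq : 0 < (A i j)^2 := by positivity
      have hdi : 0 < A i i := by nlinarith [hd i, hd j]
      have hdj : 0 < A j j := by nlinarith [hd i, hd j]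
      rw [powF_of_pos hpos, powF_of_pos hdi, powF_of_pos hdj,
        abs_of_nonneg (Real.rpow_nonneg ha0 α),
        rpow_id1'' hpos (show α = 1 + 2*((α-1)/2) from by ring)]
      exact core_bound ha0 (by positivity) hdi.le hdj.le (by nlinarith [hsq]) (by linarith)

lemma fwd_abs {G : SimpleGraph V} {X : Set V}
    (hbip : ∀ i j : V, G.Adj i j → (i ∈ X ↔ j ∉ X)) {α : ℝ} (hα : 2 ≤ α)
    {f : ℝ → ℝ} (hf0 : f 0 = 0)
    (hfd : ∀ d : ℝ, 0 ≤ d → f d = powF α d)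
    (hfabs : ∀ x : ℝ, x ≠ 0 → |f x| = |x| ^ α)
    {A : Matrix V V ℝ} (hA : A ∈ PG G Set.univ) : (A.map f).PosSemidef := by
  obtain ⟨hpsd, -, hpat⟩ := hA
  have hd : ∀ i, 0 ≤ A i i := fun i => psd_diag_nonneg hpsd i
  have hCpsd := schur_psd hpsd hpsd
  refine key_psd X (Matrix.of fun i j => A i j * A i j) (A.map f) hCpsd
    (fun i j _ => mul_self_nonneg _) ?_ (γ := (α-2)/4) (map_symm hpsd.1 _) ?_ ?_
  · intro i j hij hsame
    have h0 : A i j = 0 := hpat i j hij fun hadj => by have := hbip i j hadj; tauto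
    simp [h0]
  · intro i
    simp only [map_apply, Matrix.of_apply]
    rw [hfd _ (hd i)]
    exact powF_id2 (hd i) (by ring)
  · intro i j hij
    simp only [map_apply, Matrix.of_apply]
    rcases eq_or_ne (A i j) 0 with h0 | hne
    · rw [h0, hf0]
      simp
    · have hsq : (A i j)^2 ≤ A i i * A j j := psd_entry_sq_le hpsd i j
      have hasq : 0 < (A i j)^2 := by positivity
      have hdi : 0 < A i i := by nlinarith [hd i, hd j]
      have hdj : 0 < A j j := by nlinarith [hd i, hd j]
      rw [hfabs _ hne, powF_of_pos (mul_pos hdi hdi), powF_of_pos (mul_pos hdj hdj),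
        abs_id2' hne (show α = 2 + 4*((α-2)/4) from by ring)]
      exact core_bound (mul_self_nonneg _) (mul_nonneg (mul_self_nonneg _) (mul_self_nonneg _))
        (mul_self_nonneg _) (mul_self_nonneg _) (by nlinarith [hsq]) (by linarith)
end Apps

section Counter
variable {V : Type*} [Fintype V]

lemma exists_path2 {G : SimpleGraph V} (hcard : 3 ≤ Fintype.card V) (hconn : G.Connected) :
    ∃ i j k : V, G.Adj i j ∧ G.Adj j k ∧ i ≠ k := by
  by_contra hcon
  push_neg at hcon
  have H : ∀ i j k : V, G.Adj i j → G.Adj j k → i = k := fun i j k h1 h2 =>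
    hcon i j k h1 h2
  have key : ∀ (x y : V) (_ : G.Walk x y), x = y ∨ G.Adj x y := by
    intro x y w
    induction w with
    | nil => exact Or.inl rfl
    | cons h p ih =>
      rcases ih with rfl | hbc
      · exact Or.inr h
      · exact Or.inl (H _ _ _ h hbc)
  obtain ⟨a, b, c, hab, hac, hbc⟩ := (Fintype.two_lt_card_iff (α := V)).mp (by omega)
  obtain ⟨w1⟩ := hconn.preconnected a b
  obtain ⟨w2⟩ := hconn.preconnected b c
  have h1 := (key a b w1).resolve_left hab
  have h2 := (key b c w2).resolve_left hbc
  exact hac (H a b c h1 h2)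

set_option maxHeartbeats 1600000 in
lemma ce_bound {G : SimpleGraph V} (hcard : 3 ≤ Fintype.card V) (hconn : G.Connected)
    {α : ℝ} (hmem : ∀ A ∈ PG G (Set.Ici 0), (A.map (powF α)).PosSemidef) : 1 ≤ α := by
  classical
  obtain ⟨i, j, k, hij, hjk, hik⟩ := exists_path2 hcard hconn
  have hije : i ≠ j := G.ne_of_adj hij
  have hjke : j ≠ k := G.ne_of_adj hjk
  obtain ⟨a, ha0, ha2⟩ : ∃ a : ℝ, 0 < a ∧ a * a = 1/2 := by
    refine ⟨Real.sqrt 2 / 2, ?_, ?_⟩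
    · have := Real.sqrt_pos.mpr (show (0:ℝ) < 2 by norm_num)
      linarith
    · rw [div_mul_div_comm, Real.mul_self_sqrt (by norm_num)]
      norm_num
  set xv : V → ℝ := fun v => if v = i then a else if v = j then 1 else if v = k then a else 0
    with hxv
  set yv : V → ℝ := fun v => if v = i then a else if v = k then -a else 0 with hyv
  set A : Matrix V V ℝ := Matrix.of (fun p q => xv p * xv q + yv p * yv q) with hA
  have hpsd : A.PosSemidef := by
    refine posSemidef_of_quad _ ?_ ?_
    · show _ = _
      ext p q
      simp only [conjTranspose_apply, hA, Matrix.of_apply, star_trivial]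
      ring
    · intro z
      have hsum : ∑ p, ∑ q, z p * A p q * z q
          = (∑ p, z p * xv p)^2 + (∑ p, z p * yv p)^2 := by
        rw [sq, sq, Finset.sum_mul_sum, Finset.sum_mul_sum, ← Finset.sum_add_distrib]
        refine Finset.sum_congr rfl fun p _ => ?_
        rw [← Finset.sum_add_distrib]
        refine Finset.sum_congr rfl fun q _ => ?_
        simp only [hA, Matrix.of_apply]
        ring
      rw [hsum]
      positivity
  have hent : ∀ p q, 0 ≤ A p q := by
    intro p q
    simp only [hA, Matrix.of_apply, hxv, hyv]
    split_ifs <;> nlinarith [ha0, ha2]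
  have hx0 : ∀ v, v ≠ i → v ≠ j → v ≠ k → xv v = 0 ∧ yv v = 0 := by
    intro v h1 h2 h3
    simp [hxv, hyv, h1, h2, h3]
  have hpat : ∀ p q, p ≠ q → ¬ G.Adj p q → A p q = 0 := by
    intro p q hpq hnadj
    rcases Decidable.em (p = i ∨ p = j ∨ p = k) with hp | hp
    swap
    · push_neg at hp
      obtain ⟨h1, h2⟩ := hx0 p hp.1 hp.2.1 hp.2.2
      simp [hA, h1, h2]
    rcases Decidable.em (q = i ∨ q = j ∨ q = k) with hq | hq
    swap
    · push_neg at hq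
      obtain ⟨h1, h2⟩ := hx0 q hq.1 hq.2.1 hq.2.2
      simp [hA, h1, h2]
    rcases hp with rfl | rfl | rfl <;> rcases hq with rfl | rfl | rfl
    · exact absurd rfl hpq
    · exact absurd hij hnadj
    · simp [hA, hxv, hyv, hije, hjke, hik, Ne.symm hije, Ne.symm hjke, Ne.symm hik]
    · exact absurd hij.symm hnadj
    · exact absurd rfl hpq
    · exact absurd hjk hnadj
    · simp [hA, hxv, hyv, hije, hjke, hik, Ne.symm hije, Ne.symm hjke, Ne.symm hik]
    · exact absurd hjk.symm hnadj
    · exact absurd rfl hpq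
  have hmemA : A ∈ PG G (Set.Ici 0) := ⟨hpsd, fun p q => Set.mem_Ici.mpr (hent p q), hpat⟩
  have hN := hmem A hmemA
  have hAii : A i i = 1 := by
    simp [hA, hxv, hyv, hije, hjke, hik, Ne.symm hije, Ne.symm hjke, Ne.symm hik]
    linear_combination 2 * ha2
  have hAjj : A j j = 1 := by
    simp [hA, hxv, hyv, hije, hjke, hik, Ne.symm hije, Ne.symm hjke, Ne.symm hik]
  have hAkk : A k k = 1 := by
    simp [hA, hxv, hyv, hije, hjke, hik, Ne.symm hije, Ne.symm hjke, Ne.symm hik]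
    linear_combination 2 * ha2
  have hAij : A i j = a := by
    simp [hA, hxv, hyv, hije, hjke, hik, Ne.symm hije, Ne.symm hjke, Ne.symm hik]
  have hAji : A j i = a := by
    simp [hA, hxv, hyv, hije, hjke, hik, Ne.symm hije, Ne.symm hjke, Ne.symm hik]
  have hAjk : A j k = a := by
    simp [hA, hxv, hyv, hije, hjke, hik, Ne.symm hije, Ne.symm hjke, Ne.symm hik]
  have hAkj : A k j = a := by
    simp [hA, hxv, hyv, hije, hjke, hik, Ne.symm hije, Ne.symm hjke, Ne.symm hik]
  have hAik : A i k = 0 := by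
    simp [hA, hxv, hyv, hije, hjke, hik, Ne.symm hije, Ne.symm hjke, Ne.symm hik]
  have hAki : A k i = 0 := by
    simp [hA, hxv, hyv, hije, hjke, hik, Ne.symm hije, Ne.symm hjke, Ne.symm hik]
  set c : ℝ := a ^ α with hc
  have hpow1 : powF α 1 = 1 := by simp [powF]
  have hpowa : powF α a = c := powF_of_pos ha0 α
  set t : ℝ := -(2*c) with ht
  have hq := hN.dotProduct_mulVec_nonneg ((Pi.single i (1:ℝ) : V → ℝ) + (Pi.single k (1:ℝ) : V → ℝ)
    + t • (Pi.single j (1:ℝ) : V → ℝ))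
  simp only [mulVec_add, mulVec_smul, mulVec_single, dotProduct_add, add_dotProduct,
    smul_dotProduct, single_dotProduct, star_trivial, Pi.add_apply, Pi.smul_apply,
    smul_eq_mul, mul_one, Matrix.map_apply, Matrix.col_apply, MulOpposite.op_one, one_smul,
    one_mul] at hq
  rw [hAii, hAjj, hAkk, hAij, hAji, hAjk, hAkj, hAik, hAki] at hq
  rw [hpow1, hpowa, powF_zero'] at hq
  have hcsq : c * c ≤ 1/2 := by nlinarith [hq]
  have hhalf : (1/2:ℝ) ^ α ≤ (1/2:ℝ) ^ (1:ℝ) := by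
    rw [Real.rpow_one]
    calc (1/2:ℝ) ^ α = c * c := by rw [hc, ← Real.mul_rpow ha0.le ha0.le, ha2]
      _ ≤ 1/2 := hcsq
  exact (Real.rpow_le_rpow_left_iff_of_base_lt_one (by norm_num) (by norm_num)).mp hhalf
end Counter

section Final

lemma phiF_zero (α : ℝ) : phiF α 0 = 0 := by simp [phiF]
lemma psiF_zero (α : ℝ) : psiF α 0 = 0 := by simp [psiF]

lemma phiF_eq_powF {x : ℝ} (hx : 0 ≤ x) (α : ℝ) : phiF α x = powF α x := by
  rcases eq_or_lt_of_le hx with rfl | h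
  · simp [phiF, powF]
  · simp [phiF, powF, h.ne', abs_of_nonneg hx]

lemma psiF_eq_powF {x : ℝ} (hx : 0 ≤ x) (α : ℝ) : psiF α x = powF α x := by
  rcases eq_or_lt_of_le hx with rfl | h
  · simp [psiF, powF]
  · simp [psiF, powF, h.ne', abs_of_nonneg hx, Real.sign_of_pos h]

lemma phiF_abs {x : ℝ} (hx : x ≠ 0) (α : ℝ) : |phiF α x| = |x| ^ α := by
  rw [phiF, if_neg hx, abs_of_nonneg (Real.rpow_nonneg (abs_nonneg x) α)]

lemma psiF_abs {x : ℝ} (hx : x ≠ 0) (α : ℝ) : |psiF α x| = |x| ^ α := by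
  rw [psiF, if_neg hx, abs_mul, abs_of_nonneg (Real.rpow_nonneg (abs_nonneg x) α)]
  rcases lt_or_gt_of_ne hx with h | h
  · rw [Real.sign_of_neg h]
    norm_num
  · rw [Real.sign_of_pos h]
    norm_num

lemma psiF_one (x : ℝ) : psiF 1 x = x := by
  rcases lt_trichotomy x 0 with h | rfl | h
  · rw [psiF, if_neg h.ne, Real.sign_of_neg h, Real.rpow_one, abs_of_neg h]
    ring
  · simp [psiF]
  · rw [psiF, if_neg h.ne', Real.sign_of_pos h, Real.rpow_one, abs_of_pos h]
    ring

theorem stmt18' {V : Type*} [Fintype V] (G : SimpleGraph V) (hcard : 3 ≤ Fintype.card V)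
    (hconn : G.Connected)
    (hbip : ∃ X : Set V, ∀ i j : V, G.Adj i j → (i ∈ X ↔ j ∉ X)) :
    HSet G = Set.Ici 1 ∧
    Set.Ici 2 ⊆ HSetPhi G ∧ HSetPhi G ⊆ Set.Ici 1 ∧
    {(1 : ℝ)} ∪ Set.Ici 3 ⊆ HSetPsi G ∧ HSetPsi G ⊆ Set.Ici 1 := by
  obtain ⟨X, hbipX⟩ := hbip
  have huniv : ∀ A ∈ PG G (Set.Ici 0), A ∈ PG G Set.univ :=
    fun A hA => ⟨hA.1, fun _ _ => trivial, hA.2.2⟩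
  have hpatmap : ∀ (f : ℝ → ℝ), f 0 = 0 → ∀ A ∈ PG G Set.univ,
      ∀ i j, i ≠ j → ¬ G.Adj i j → (A.map f) i j = 0 := by
    intro f hf A hA i j hij hnadj
    rw [Matrix.map_apply, hA.2.2 i j hij hnadj, hf]
  refine ⟨?_, ?_, ?_, ?_, ?_⟩
  · ext α
    simp only [HSet, Set.mem_setOf_eq, Set.mem_Ici]
    constructor
    · intro hα
      exact ce_bound hcard hconn fun A hA => (hα A hA).1
    · intro hα A hA
      exact ⟨fwd_pow hbipX hα hA, fun _ _ => trivial,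
        hpatmap (powF α) (powF_zero' α) A (huniv A hA)⟩
  · intro α hα A hA
    exact ⟨fwd_abs hbipX hα (phiF_zero α) (fun d hd => phiF_eq_powF hd α)
      (fun x hx => phiF_abs hx α) hA, fun _ _ => trivial,
      hpatmap (phiF α) (phiF_zero α) A hA⟩
  · intro α hα
    refine ce_bound hcard hconn fun A hA => ?_
    have hmap : A.map (powF α) = A.map (phiF α) := by
      ext i j
      simp only [Matrix.map_apply]
      exact (phiF_eq_powF (hA.2.1 i j) α).symm
    rw [hmap]
    exact (hα A (huniv A hA)).1
  · rintro α (rfl | hα3)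
    · intro A hA
      have hmap : A.map (psiF 1) = A := by
        ext i j
        simp [Matrix.map_apply, psiF_one]
      rw [hmap]
      exact hA
    · intro A hA
      exact ⟨fwd_abs hbipX (by linarith [Set.mem_Ici.mp hα3]) (psiF_zero α)
        (fun d hd => psiF_eq_powF hd α) (fun x hx => psiF_abs hx α) hA,
        fun _ _ => trivial, hpatmap (psiF α) (psiF_zero α) A hA⟩
  · intro α hα
    refine ce_bound hcard hconn fun A hA => ?_
    have hmap : A.map (powF α) = A.map (psiF α) := by
      ext i j
      simp only [Matrix.map_apply]
      exact (psiF_eq_powF (hA.2.1 i j) α).symm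
    rw [hmap]
    exact (hα A (huniv A hA)).1
end Final

/-- For a connected bipartite graph `G` on at least 3 vertices: `H_G = [1, ∞)`,
`[2, ∞) ⊆ H_G^φ ⊆ [1, ∞)`, and `{1} ∪ [3, ∞) ⊆ H_G^ψ ⊆ [1, ∞)`. -/
theorem stmt18 {V : Type*} [Fintype V] (G : SimpleGraph V) (hcard : 3 ≤ Fintype.card V)
    (hconn : G.Connected)
    (hbip : ∃ X : Set V, ∀ i j : V, G.Adj i j → (i ∈ X ↔ j ∉ X)) :
    HSet G = Set.Ici 1 ∧
    Set.Ici 2 ⊆ HSetPhi G ∧ HSetPhi G ⊆ Set.Ici 1 ∧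
    {(1 : ℝ)} ∪ Set.Ici 3 ⊆ HSetPsi G ∧ HSetPsi G ⊆ Set.Ici 1 :=
  stmt18' G hcard hconn hbip
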